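/- For every r-regular simple graph G on 2n vertices, the number of perfect matchings of G is at most (r!)^{n/r}. -/

import Mathlib

open Finset

lemma pow_self_le {ι : Type*} (s : Finset ι) (t : ι → ℕ) (p : ℕ) (hp : (p:ℕ) = ∑ i ∈ s, t i) :
    (p:ℝ)^p ≤ (s.card:ℝ)^p * ∏ i ∈ s, (t i:ℝ)^(t i) := by
  rcases Nat.eq_zero_or_pos p with h0 | hpos
  · subst h0
    have : ∀ i ∈ s, t i = 0 := by
      intro i hi
      exact Finset.sum_eq_zero_iff.mp hp.symm i hi
    simp only [pow_zero, Nat.cast_zero]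
    rw [Finset.prod_congr rfl (fun i hi => by rw [this i hi])]
    simp
  · set s' := s.filter (fun i => t i ≠ 0) with hs'
    have hsum' : ∑ i ∈ s', t i = p := by
      rw [hp]
      exact Finset.sum_filter_ne_zero s
    have hpne : (p:ℝ) ≠ 0 := Nat.cast_ne_zero.mpr hpos.ne'
    have key : ∏ i ∈ s', ((p:ℝ) / t i) ^ ((t i : ℝ)/p) ≤ s'.card := by
      have := Real.geom_mean_le_arith_mean_weighted s' (fun i => (t i : ℝ)/p)
        (fun i => (p:ℝ)/ t i)
        (fun i _ => by positivity)
        (by rw [← Finset.sum_div, ← Nat.cast_sum, hsum', div_self hpne])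
        (fun i _ => by positivity)
      calc ∏ i ∈ s', ((p:ℝ) / t i) ^ ((t i : ℝ)/p) ≤ ∑ i ∈ s', ((t i:ℝ)/p) * ((p:ℝ)/t i) := this
        _ = ∑ i ∈ s', 1 := by
            refine Finset.sum_congr rfl (fun i hi => ?_)
            have hti : (t i : ℝ) ≠ 0 := by
              have := (Finset.mem_filter.mp hi).2
              exact Nat.cast_ne_zero.mpr this
            field_simp
        _ = s'.card := by simp
    -- raise to the p-th power
    have key2 : ∏ i ∈ s', ((p:ℝ) / t i) ^ (t i) ≤ (s'.card:ℝ)^p := by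
      have h1 : (∏ i ∈ s', ((p:ℝ) / t i) ^ ((t i : ℝ)/p))^p ≤ ((s'.card:ℝ))^p := by
        apply pow_le_pow_left₀ (Finset.prod_nonneg (fun i _ => by positivity)) key
      calc ∏ i ∈ s', ((p:ℝ) / t i) ^ (t i)
          = (∏ i ∈ s', ((p:ℝ) / t i) ^ ((t i : ℝ)/p))^p := by
            rw [← Finset.prod_pow]
            refine Finset.prod_congr rfl (fun i hi => ?_)
            rw [← Real.rpow_natCast (((p:ℝ)/t i) ^ ((t i : ℝ)/p)) p, ← Real.rpow_mul (by positivity),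
              div_mul_cancel₀ _ hpne, Real.rpow_natCast]
        _ ≤ _ := h1
    have key3 : (p:ℝ)^p ≤ (s'.card:ℝ)^p * ∏ i ∈ s', (t i:ℝ)^(t i) := by
      have hprod : (p:ℝ)^p = (∏ i ∈ s', ((p:ℝ) / t i) ^ (t i)) * ∏ i ∈ s', (t i:ℝ)^(t i) := by
        rw [← Finset.prod_mul_distrib]
        have : ∀ i ∈ s', ((p:ℝ)/t i)^(t i) * (t i:ℝ)^(t i) = (p:ℝ)^(t i) := by
          intro i hi
          have hti : (t i : ℝ) ≠ 0 := Nat.cast_ne_zero.mpr (Finset.mem_filter.mp hi).2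
          rw [← mul_pow, div_mul_cancel₀ _ hti]
        rw [Finset.prod_congr rfl this, Finset.prod_pow_eq_pow_sum, hsum']
      rw [hprod]
      exact mul_le_mul_of_nonneg_right key2 (Finset.prod_nonneg (fun i _ => by positivity))
    refine key3.trans ?_
    have hcard : (s'.card:ℝ)^p ≤ (s.card:ℝ)^p := by
      apply pow_le_pow_left₀ (by positivity)
      exact_mod_cast Finset.card_le_card (Finset.filter_subset _ _)
    have hprodeq : ∏ i ∈ s', (t i:ℝ)^(t i) = ∏ i ∈ s, (t i:ℝ)^(t i) := by
      apply Finset.prod_subset (Finset.filter_subset _ _)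
      intro i hi hni
      have : t i = 0 := by
        by_contra h
        exact hni (Finset.mem_filter.mpr ⟨hi, h⟩)
      simp [this]
    rw [hprodeq]
    exact mul_le_mul_of_nonneg_right hcard (Finset.prod_nonneg (fun i _ => by positivity))

open Finset

set_option linter.unusedSectionVars false
variable {V W : Type} [Fintype V] [Fintype W] [DecidableEq V] [DecidableEq W]

/-- number of "systems of distinct representatives": bijections compatible with 0-1 matrix A -/
def bijCount (A : V → W → ℕ) : ℕ := Fintype.card {e : W ≃ V // ∀ c, A (e c) c = 1}

def fibCount (A : V → W → ℕ) (c : W) (r : V) : ℕ :=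
  Fintype.card {e : W ≃ V // (∀ c', A (e c') c' = 1) ∧ e c = r}

def colSum (A : V → W → ℕ) (c : W) : ℕ := ∑ v : V, A v c

def minorM (A : V → W → ℕ) (r : V) (c : W) : {v // v ≠ r} → {w // w ≠ c} → ℕ :=
  fun v w => A v.1 w.1

lemma bijCount_eq_sum_fib (A : V → W → ℕ) (c : W) :
    bijCount A = ∑ r : V, fibCount A c r := by
  classical
  rw [bijCount, Fintype.card_subtype]
  rw [Finset.card_eq_sum_card_fiberwise (f := fun e : W ≃ V => e c) (t := Finset.univ)
    (fun x _ => Finset.mem_univ _)]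
  refine Finset.sum_congr rfl (fun r _ => ?_)
  rw [fibCount, Fintype.card_subtype, Finset.filter_filter]

lemma fibCount_le_minor (A : V → W → ℕ) (c : W) (r : V) :
    fibCount A c r ≤ bijCount (minorM A r c) := by
  classical
  apply Fintype.card_le_of_injective
    (fun x => ⟨Equiv.subtypeEquiv x.1 (fun w => by
        constructor
        · intro hw hew
          exact hw (x.1.injective (by rw [hew, x.2.2]))
        · intro hew hw
          rw [hw, x.2.2] at hew; exact hew rfl), by
      intro c'
      exact x.2.1 c'.1⟩)
  rintro ⟨e₁, he₁, hc₁⟩ ⟨e₂, he₂, hc₂⟩ h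
  simp only [Subtype.mk.injEq] at h ⊢
  ext w
  rcases eq_or_ne w c with rfl | hw
  · rw [hc₁, hc₂]
  · have := congrArg (fun (q : {w // w ≠ c} ≃ {v // v ≠ r}) => (q ⟨w, hw⟩ : V)) (congrArg Subtype.val h)
    simpa using this

lemma fibCount_eq_zero (A : V → W → ℕ) {c : W} {r : V} (h : A r c ≠ 1) :
    fibCount A c r = 0 := by
  rw [fibCount, Fintype.card_eq_zero_iff]
  constructor
  rintro ⟨e, he, hec⟩
  exact h (by rw [← hec]; exact he c)

lemma colSum_eq_card (A : V → W → ℕ) (h01 : ∀ v w, A v w ≤ 1) (c : W) :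
    colSum A c = (Finset.univ.filter (fun r => A r c = 1)).card := by
  rw [colSum, Finset.card_filter]
  refine Finset.sum_congr rfl (fun v _ => ?_)
  have := h01 v c
  interval_cases h : A v c <;> simp

lemma colSum_minor (A : V → W → ℕ) (r : V) (c : W) (c' : {w // w ≠ c}) :
    A r c'.1 + colSum (minorM A r c) c' = colSum A c'.1 := by
  have h1 : colSum (minorM A r c) c' = ∑ v ∈ Finset.univ.erase r, A v c'.1 :=
    (Finset.sum_subtype (Finset.univ.erase r) (p := fun v => v ≠ r) (by simp) (fun v => A v c'.1)).symm
  rw [h1, colSum]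
  exact Finset.add_sum_erase _ (fun v => A v c'.1) (Finset.mem_univ r)

lemma prod_fib_group (A : V → W → ℕ) (c : W) (f : V → ℝ) :
    ∏ e ∈ Finset.univ.filter (fun e : W ≃ V => ∀ c', A (e c') c' = 1), f (e c)
      = ∏ r : V, f r ^ (fibCount A c r) := by
  classical
  rw [← Finset.prod_fiberwise_of_maps_to (g := fun e : W ≃ V => e c) (t := Finset.univ)
    (fun x _ => Finset.mem_univ _)]
  refine Finset.prod_congr rfl (fun r _ => ?_)
  rw [fibCount, Fintype.card_subtype, Finset.filter_filter]
  rw [Finset.prod_congr rfl (fun e he => show f (e c) = f r by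
      simp only [Finset.mem_filter] at he
      rw [he.2.2]), Finset.prod_const]

lemma bijCount_card_eq (A : V → W → ℕ) :
    bijCount A = (Finset.univ.filter (fun e : W ≃ V => ∀ c', A (e c') c' = 1)).card :=
  Fintype.card_subtype _
noncomputable def fb (x : ℕ) : ℝ := (Nat.factorial x : ℝ) ^ ((1:ℝ) / (x:ℝ))

lemma fb_pos (x : ℕ) : 0 < fb x :=
  Real.rpow_pos_of_pos (by exact_mod_cast Nat.factorial_pos x) _

lemma fb_pow (m : ℕ) : (fb m) ^ m = (Nat.factorial m : ℝ) := by
  rcases Nat.eq_zero_or_pos m with h | h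
  · simp [fb, h]
  · have hm : (m:ℝ) ≠ 0 := Nat.cast_ne_zero.mpr h.ne'
    rw [fb, ← Real.rpow_natCast ((Nat.factorial m : ℝ) ^ ((1:ℝ)/(m:ℝ))) m,
      ← Real.rpow_mul (by positivity), one_div, inv_mul_cancel₀ hm, Real.rpow_one]

lemma fb_algebra (d M : ℕ) (h1 : 1 ≤ d) (h2 : d ≤ M) :
    (d:ℝ) * (((d-1).factorial : ℝ) * fb d ^ (M - d)) = fb d ^ M := by
  rw [← mul_assoc]
  have hd : (d:ℝ) * ((d-1).factorial:ℝ) = (d.factorial : ℝ) := by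
    exact_mod_cast congrArg (Nat.cast (R := ℝ)) (Nat.mul_factorial_pred (by omega : d ≠ 0))
  rw [hd, ← fb_pow d, ← pow_add]
  congr 1
  omega

set_option maxHeartbeats 1000000 in
theorem bregman_aux : ∀ (N : ℕ) (V W : Type) [Fintype V] [Fintype W] [DecidableEq V]
    [DecidableEq W] (A : V → W → ℕ), (∀ v w, A v w ≤ 1) → Fintype.card W = N →
    (bijCount A : ℝ) ≤ ∏ c : W, fb (colSum A c) := by
  intro N
  induction N with
  | zero =>
    intro V W _ _ _ _ A h01 hcard
    have hW : IsEmpty W := Fintype.card_eq_zero_iff.mp hcard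
    rw [Finset.univ_eq_empty, Finset.prod_empty]
    have hsub : Subsingleton (W ≃ V) :=
      ⟨fun e₁ e₂ => Equiv.ext fun w => isEmptyElim w⟩
    have : bijCount A ≤ 1 := by
      rw [bijCount]
      exact Fintype.card_le_one_iff_subsingleton.mpr (by infer_instance)
    exact_mod_cast this
  | succ N IH =>
    intro V W _ _ _ _ A h01 hcardW
    by_cases hp0 : bijCount A = 0
    · rw [hp0]
      exact_mod_cast Finset.prod_nonneg fun c _ => (fb_pos _).le
    set p := bijCount A with hpdef
    have hppos : 1 ≤ p := Nat.pos_of_ne_zero hp0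
    obtain ⟨e₀, he₀⟩ : ∃ e : W ≃ V, ∀ c, A (e c) c = 1 := by
      obtain ⟨⟨e, he⟩⟩ := Fintype.card_pos_iff.mp (Nat.pos_of_ne_zero hp0)
      exact ⟨e, he⟩
    have hcardV : Fintype.card V = N + 1 := by
      rw [← hcardW]; exact (Fintype.card_congr e₀).symm
    set d := fun c : W => colSum A c with hd
    set J := fun c : W => Finset.univ.filter (fun r : V => A r c = 1) with hJ
    have hdJ : ∀ c, d c = (J c).card := fun c => colSum_eq_card A h01 c
    set SA := Finset.univ.filter (fun e : W ≃ V => ∀ c', A (e c') c' = 1) with hSA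
    have hSAcard : SA.card = p := (bijCount_card_eq A).symm
    set t := fun (c : W) (r : V) => fibCount A c r with ht
    have hsum : ∀ c, p = ∑ r ∈ J c, t c r := by
      intro c
      rw [hpdef, bijCount_eq_sum_fib A c]
      symm
      apply Finset.sum_subset (Finset.filter_subset _ _)
      intro r _ hr
      exact fibCount_eq_zero A (fun h1 => hr (Finset.mem_filter.mpr ⟨Finset.mem_univ _, h1⟩))
    have step1 : ∀ c, (p:ℝ)^p ≤ (d c:ℝ)^p * ∏ r ∈ J c, (t c r:ℝ)^(t c r) := by
      intro c
      rw [hdJ c]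
      exact pow_self_le (J c) (t c) p (hsum c)
    have step2 : ∀ c, ∏ r ∈ J c, (t c r:ℝ)^(t c r) = ∏ e ∈ SA, (t c (e c) : ℝ) := by
      intro c
      rw [prod_fib_group A c (fun r => (t c r:ℝ))]
      apply Finset.prod_subset (Finset.subset_univ _)
      intro r _ hr
      have : t c r = 0 :=
        fibCount_eq_zero A (fun h1 => hr (Finset.mem_filter.mpr ⟨Finset.mem_univ _, h1⟩))
      simp [this]
    -- bounds for a fixed e ∈ SA
    have perE : ∀ e ∈ SA, ∏ c : W, (t c (e c):ℝ)
        ≤ ∏ j : W, (((d j - 1).factorial : ℝ) * fb (d j) ^ (N + 1 - d j)) := by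
      intro e heSA
      have he : ∀ c', A (e c') c' = 1 := (Finset.mem_filter.mp heSA).2
      have hd1 : ∀ j, 1 ≤ d j := by
        intro j
        rw [hdJ j]
        exact Finset.card_pos.mpr ⟨e j, Finset.mem_filter.mpr ⟨Finset.mem_univ _, he j⟩⟩
      have hdN : ∀ j, d j ≤ N + 1 := by
        intro j
        rw [hdJ j, ← hcardV, ← Finset.card_univ]
        exact Finset.card_le_card (Finset.filter_subset _ _)
      have step3 : ∀ c, (t c (e c):ℝ) ≤ ∏ w ∈ Finset.univ.erase c, fb (d w - A (e c) w) := by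
        intro c
        have h1 : t c (e c) ≤ bijCount (minorM A (e c) c) := fibCount_le_minor A c (e c)
        have h2 : (bijCount (minorM A (e c) c) : ℝ)
            ≤ ∏ c' : {w : W // w ≠ c}, fb (colSum (minorM A (e c) c) c') := by
          apply IH
          · intro v w; exact h01 v.1 w.1
          · have h3 := Fintype.card_subtype_compl (fun w : W => w = c)
            rw [Fintype.card_subtype_eq, hcardW] at h3
            exact h3
        have h4 : ∏ c' : {w : W // w ≠ c}, fb (colSum (minorM A (e c) c) c')
            = ∏ w ∈ Finset.univ.erase c, fb (d w - A (e c) w) := by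
          have h5 : ∀ c' : {w : W // w ≠ c},
              fb (colSum (minorM A (e c) c) c') = fb (d c'.1 - A (e c) c'.1) := by
            intro c'
            congr 1
            have h6 := colSum_minor A (e c) c c'
            simp only [hd]
            omega
          rw [Finset.prod_congr rfl (fun c' _ => h5 c')]
          exact (Finset.prod_subtype (Finset.univ.erase c) (p := fun w => w ≠ c) (by simp)
            (fun w => fb (d w - A (e c) w))).symm
        calc (t c (e c):ℝ) ≤ (bijCount (minorM A (e c) c) : ℝ) := by exact_mod_cast h1
          _ ≤ _ := h2
          _ = _ := h4
      have step4 : ∏ c : W, ∏ w ∈ Finset.univ.erase c, fb (d w - A (e c) w)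
          = ∏ j : W, ∏ c ∈ Finset.univ.erase j, fb (d j - A (e c) j) := by
        apply Finset.prod_comm' (s := Finset.univ) (t := fun c => Finset.univ.erase c)
          (t' := Finset.univ) (s' := fun j => Finset.univ.erase j)
        intro c j
        simp only [Finset.mem_univ, Finset.mem_erase, true_and, and_true]
        exact ne_comm
      have step5 : ∀ j : W, ∏ c ∈ Finset.univ.erase j, fb (d j - A (e c) j)
          = ((d j - 1).factorial : ℝ) * fb (d j) ^ (N + 1 - d j) := by
        intro j
        rw [← Finset.prod_filter_mul_prod_filter_not (Finset.univ.erase j)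
          (fun c => A (e c) j = 1)]
        set T1 := (Finset.univ.erase j).filter (fun c => A (e c) j = 1) with hT1
        set T0 := (Finset.univ.erase j).filter (fun c => ¬ A (e c) j = 1) with hT0
        have hT1card : T1.card = d j - 1 := by
          have hbij : T1.card = ((J j).erase (e j)).card := by
            apply Finset.card_bij (fun c _ => e c)
            · intro c hc
              simp only [hT1, Finset.mem_filter, Finset.mem_erase, Finset.mem_univ,
                and_true] at hc
              refine Finset.mem_erase.mpr ⟨fun hec => hc.1 (e.injective hec), ?_⟩
              exact Finset.mem_filter.mpr ⟨Finset.mem_univ _, hc.2⟩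
            · intro c₁ h₁ c₂ h₂ hh
              exact e.injective hh
            · intro v hv
              simp only [Finset.mem_erase, hJ, Finset.mem_filter, Finset.mem_univ,
                true_and] at hv
              refine ⟨e.symm v, ?_, by simp⟩
              simp only [hT1, Finset.mem_filter, Finset.mem_erase, Finset.mem_univ,
                and_true, true_and]
              exact ⟨fun hj => hv.1 (by rw [← hj]; simp), by simp [hv.2]⟩

          rw [hbij, Finset.card_erase_of_mem, ← hdJ j]
          exact Finset.mem_filter.mpr ⟨Finset.mem_univ _, he j⟩
        have hTcards : T1.card + T0.card = N := by
          rw [hT1, hT0, Finset.card_filter_add_card_filter_not,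
            Finset.card_erase_of_mem (Finset.mem_univ j), Finset.card_univ, hcardW]
          omega
        have hT0card : T0.card = N + 1 - d j := by
          have := hd1 j; have := hdN j; omega
        have hprod1 : ∏ c ∈ T1, fb (d j - A (e c) j) = ((d j - 1).factorial : ℝ) := by
          rw [Finset.prod_congr rfl (fun c hc => show fb (d j - A (e c) j) = fb (d j - 1) by
            simp only [hT1, Finset.mem_filter] at hc
            rw [hc.2]), Finset.prod_const, hT1card, fb_pow]
        have hprod0 : ∏ c ∈ T0, fb (d j - A (e c) j) = fb (d j) ^ (N + 1 - d j) := by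
          rw [Finset.prod_congr rfl (fun c hc => show fb (d j - A (e c) j) = fb (d j) by
            simp only [hT0, Finset.mem_filter] at hc
            have := h01 (e c) j
            have : A (e c) j = 0 := by omega
            rw [this, Nat.sub_zero]), Finset.prod_const, hT0card]
        rw [hprod1, hprod0]
      calc ∏ c : W, (t c (e c):ℝ)
          ≤ ∏ c : W, ∏ w ∈ Finset.univ.erase c, fb (d w - A (e c) w) :=
            Finset.prod_le_prod (fun c _ => by positivity) (fun c _ => step3 c)
        _ = ∏ j : W, ∏ c ∈ Finset.univ.erase j, fb (d j - A (e c) j) := step4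
        _ = ∏ j : W, (((d j - 1).factorial : ℝ) * fb (d j) ^ (N + 1 - d j)) :=
            Finset.prod_congr rfl (fun j _ => step5 j)
    -- assemble
    have hd1' : ∀ j, 1 ≤ d j := by
      intro j
      rw [hdJ j]
      exact Finset.card_pos.mpr ⟨e₀ j, Finset.mem_filter.mpr ⟨Finset.mem_univ _, he₀ j⟩⟩
    have hdN' : ∀ j, d j ≤ N + 1 := by
      intro j
      rw [hdJ j, ← hcardV, ← Finset.card_univ]
      exact Finset.card_le_card (Finset.filter_subset _ _)
    have main : (p:ℝ)^((N+1)*p) ≤ (∏ c : W, fb (d c))^((N+1)*p) := by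
      calc (p:ℝ)^((N+1)*p) = ∏ _c : W, (p:ℝ)^p := by
            rw [Finset.prod_const, Finset.card_univ, hcardW, ← pow_mul, mul_comm]
        _ ≤ ∏ c : W, ((d c:ℝ)^p * ∏ e ∈ SA, (t c (e c) : ℝ)) := by
            apply Finset.prod_le_prod (fun c _ => by positivity)
            intro c _
            calc (p:ℝ)^p ≤ (d c:ℝ)^p * ∏ r ∈ J c, (t c r:ℝ)^(t c r) := step1 c
              _ = _ := by rw [step2 c]
        _ = (∏ c : W, (d c:ℝ)^p) * ∏ c : W, ∏ e ∈ SA, (t c (e c) : ℝ) :=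
            Finset.prod_mul_distrib
        _ = (∏ c : W, (d c:ℝ)^p) * ∏ e ∈ SA, ∏ c : W, (t c (e c) : ℝ) := by
            rw [Finset.prod_comm]
        _ ≤ (∏ c : W, (d c:ℝ)^p) * ∏ e ∈ SA,
              (∏ j : W, (((d j - 1).factorial : ℝ) * fb (d j) ^ (N + 1 - d j))) := by
            apply mul_le_mul_of_nonneg_left _ (Finset.prod_nonneg (fun c _ => by positivity))
            apply Finset.prod_le_prod (fun e _ => Finset.prod_nonneg (fun c _ => by positivity))
            exact fun e he => perE e he
        _ = (∏ c : W, (d c:ℝ)^p) *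
              (∏ j : W, (((d j - 1).factorial : ℝ) * fb (d j) ^ (N + 1 - d j)))^p := by
            rw [Finset.prod_const, hSAcard]
        _ = ∏ j : W, ((d j:ℝ) * (((d j - 1).factorial : ℝ) * fb (d j) ^ (N + 1 - d j)))^p := by
            rw [← Finset.prod_pow, ← Finset.prod_mul_distrib]
            exact Finset.prod_congr rfl (fun j _ => by ring)
        _ = ∏ j : W, (fb (d j)^(N+1))^p :=
            Finset.prod_congr rfl (fun j _ => by rw [fb_algebra (d j) (N+1) (hd1' j) (hdN' j)])
        _ = (∏ c : W, fb (d c))^((N+1)*p) := by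
            rw [pow_mul, ← Finset.prod_pow, ← Finset.prod_pow]
    have hbase : (0:ℝ) ≤ ∏ c : W, fb (d c) :=
      Finset.prod_nonneg (fun c _ => (fb_pos _).le)
    have := le_of_pow_le_pow_left₀ (n := (N+1)*p) (by positivity) hbase main
    exact this

open Equiv Finset
set_option linter.unusedSectionVars false

section InvolPair

variable {V : Type} [Fintype V] [LinearOrder V]

variable (f g : Equiv.Perm V)

def zp : Equiv.Perm V := g * f

def Ucyc (v : V) : Finset V :=
  Finset.univ.filter (fun w => (zp f g).SameCycle v w ∨ (zp f g).SameCycle (f v) w)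

lemma mem_Ucyc_self (v : V) : v ∈ Ucyc f g v :=
  Finset.mem_filter.mpr ⟨Finset.mem_univ _, Or.inl (Equiv.Perm.SameCycle.refl _ _)⟩

def mu (v : V) : V := (Ucyc f g v).min' ⟨v, mem_Ucyc_self f g v⟩

def Pos (v : V) : Prop := (zp f g).SameCycle (mu f g v) v

instance (v : V) : Decidable (Pos f g v) := by unfold Pos; infer_instance

variable {f g}

lemma ffv (hf : f * f = 1) (v : V) : f (f v) = v := by
  have := congrArg (fun p : Equiv.Perm V => p v) hf
  simpa using this

lemma finv (hf : f * f = 1) : f⁻¹ = f := by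
  rw [← mul_eq_one_iff_inv_eq]
  exact hf

lemma zp_inv (hf : f * f = 1) (hg : g * g = 1) : (zp f g)⁻¹ = f * g := by
  rw [zp, mul_inv_rev, finv hf, finv hg]

lemma conj_f (hf : f * f = 1) (hg : g * g = 1) : f * zp f g * f⁻¹ = (zp f g)⁻¹ := by
  rw [finv hf, zp_inv hf hg, zp]
  ext v
  simp [Equiv.Perm.mul_apply, ffv hf]

lemma conj_g (hf : f * f = 1) (hg : g * g = 1) : g * zp f g * g⁻¹ = (zp f g)⁻¹ := by
  rw [finv hg, zp_inv hf hg, zp]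
  ext v
  simp [Equiv.Perm.mul_apply, ffv hg]

lemma f_zpow (hf : f * f = 1) (hg : g * g = 1) (k : ℤ) :
    f * (zp f g)^k = (zp f g)^(-k) * f := by
  have h1 : (f * zp f g * f⁻¹)^k = f * (zp f g)^k * f⁻¹ := conj_zpow ..
  rw [conj_f hf hg] at h1
  have h2 : (zp f g)^(-k) = f * (zp f g)^k * f⁻¹ := by rw [zpow_neg, ← h1, inv_zpow]
  rw [h2, finv hf, mul_assoc, mul_assoc, hf, mul_one]

lemma g_zpow (hf : f * f = 1) (hg : g * g = 1) (k : ℤ) :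
    g * (zp f g)^k = (zp f g)^(-k) * g := by
  have h1 : (g * zp f g * g⁻¹)^k = g * (zp f g)^k * g⁻¹ := conj_zpow ..
  rw [conj_g hf hg] at h1
  have h2 : (zp f g)^(-k) = g * (zp f g)^k * g⁻¹ := by rw [zpow_neg, ← h1, inv_zpow]
  rw [h2, finv hg, mul_assoc, mul_assoc, hg, mul_one]

lemma f_zpow_apply (hf : f * f = 1) (hg : g * g = 1) (k : ℤ) (v : V) :
    f (((zp f g)^k) v) = ((zp f g)^(-k)) (f v) := by
  have := congrArg (fun p : Equiv.Perm V => p v) (f_zpow hf hg k)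
  simpa [Equiv.Perm.mul_apply] using this

lemma g_zpow_apply (hf : f * f = 1) (hg : g * g = 1) (k : ℤ) (v : V) :
    g (((zp f g)^k) v) = ((zp f g)^(-k)) (g v) := by
  have := congrArg (fun p : Equiv.Perm V => p v) (g_zpow hf hg k)
  simpa [Equiv.Perm.mul_apply] using this

lemma sc_map_f (hf : f * f = 1) (hg : g * g = 1) {a b : V}
    (h : (zp f g).SameCycle a b) : (zp f g).SameCycle (f a) (f b) := by
  obtain ⟨k, hk⟩ := h
  exact ⟨-k, by rw [← hk, ← f_zpow_apply hf hg]⟩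

lemma z_fv (hf : f * f = 1) (v : V) : (zp f g) (f v) = g v := by
  simp [zp, Equiv.Perm.mul_apply, ffv hf]

lemma zinv_v (hf : f * f = 1) (hg : g * g = 1) (v : V) : (zp f g)⁻¹ v = f (g v) := by
  rw [zp_inv hf hg]
  rfl

lemma not_sc_fv (hf : f * f = 1) (hg : g * g = 1) (hf' : ∀ v, f v ≠ v) (hg' : ∀ v, g v ≠ v)
    (v : V) : ¬ (zp f g).SameCycle v (f v) := by
  rintro ⟨k, hk⟩
  rcases Int.even_or_odd k with ⟨j, hj⟩ | ⟨j, hj⟩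
  · apply hf' (((zp f g)^j) v)
    rw [f_zpow_apply hf hg, ← hk, ← Equiv.Perm.mul_apply, ← zpow_add]
    congr 2
    omega
  · apply hg' (((zp f g)^(j+1)) v)
    have hgv : g v = ((zp f g)^(k+1)) v := by
      rw [add_comm, zpow_add, zpow_one, Equiv.Perm.mul_apply, hk, z_fv hf]
    rw [g_zpow_apply hf hg, hgv, ← Equiv.Perm.mul_apply, ← zpow_add]
    congr 2
    omega

lemma sc_fv_gv (hf : f * f = 1) (v : V) : (zp f g).SameCycle (f v) (g v) :=
  ⟨1, by rw [zpow_one, z_fv hf]⟩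

lemma Ucyc_f (hf : f * f = 1) (v : V) : Ucyc f g (f v) = Ucyc f g v := by
  ext w
  simp only [Ucyc, Finset.mem_filter, Finset.mem_univ, true_and, ffv hf]
  exact or_comm

lemma Ucyc_g (hf : f * f = 1) (hg : g * g = 1) (v : V) : Ucyc f g (g v) = Ucyc f g v := by
  ext w
  simp only [Ucyc, Finset.mem_filter, Finset.mem_univ, true_and]
  have h1 : ∀ x, (zp f g).SameCycle (g v) x ↔ (zp f g).SameCycle (f v) x := by
    intro x
    rw [← z_fv hf (g := g) v, Equiv.Perm.sameCycle_apply_left]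
  have h2 : ∀ x, (zp f g).SameCycle (f (g v)) x ↔ (zp f g).SameCycle v x := by
    intro x
    rw [show f (g v) = (zp f g)⁻¹ v from (zinv_v hf hg v).symm,
      Equiv.Perm.inv_def, Equiv.Perm.sameCycle_symm_apply_left]
  rw [h1, h2]
  exact or_comm

lemma mem_Ucyc_iff {v w : V} :
    w ∈ Ucyc f g v ↔ ((zp f g).SameCycle v w ∨ (zp f g).SameCycle (f v) w) := by
  simp [Ucyc]

lemma Uinv (hf : f * f = 1) (hg : g * g = 1) {v w : V} (hw : w ∈ Ucyc f g v) :
    Ucyc f g w = Ucyc f g v := by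
  rcases mem_Ucyc_iff.mp hw with h | h
  · ext x
    rw [mem_Ucyc_iff, mem_Ucyc_iff]
    have e1 : ∀ x, (zp f g).SameCycle w x ↔ (zp f g).SameCycle v x :=
      fun x => ⟨fun hh => h.trans hh, fun hh => h.symm.trans hh⟩
    have hfw : (zp f g).SameCycle (f v) (f w) := sc_map_f hf hg h
    have e2 : ∀ x, (zp f g).SameCycle (f w) x ↔ (zp f g).SameCycle (f v) x :=
      fun x => ⟨fun hh => hfw.trans hh, fun hh => hfw.symm.trans hh⟩
    rw [e1, e2]
  · ext x
    rw [mem_Ucyc_iff, mem_Ucyc_iff]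
    have e1 : ∀ x, (zp f g).SameCycle w x ↔ (zp f g).SameCycle (f v) x :=
      fun x => ⟨fun hh => h.trans hh, fun hh => h.symm.trans hh⟩
    have hfw : (zp f g).SameCycle v (f w) := by
      have := sc_map_f hf hg h
      rwa [ffv hf] at this
    have e2 : ∀ x, (zp f g).SameCycle (f w) x ↔ (zp f g).SameCycle v x :=
      fun x => ⟨fun hh => hfw.trans hh, fun hh => hfw.symm.trans hh⟩
    rw [e1, e2]
    exact or_comm

lemma min'_congr {s t : Finset V} (h : s = t) (hs : s.Nonempty) (ht : t.Nonempty) :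
    s.min' hs = t.min' ht := by subst h; rfl

lemma mu_f (hf : f * f = 1) (v : V) : mu f g (f v) = mu f g v :=
  min'_congr (Ucyc_f hf v) _ _

lemma mu_g (hf : f * f = 1) (hg : g * g = 1) (v : V) : mu f g (g v) = mu f g v :=
  min'_congr (Ucyc_g hf hg v) _ _

lemma mu_mem (v : V) : mu f g v ∈ Ucyc f g v := Finset.min'_mem _ _

lemma mu_mu (hf : f * f = 1) (hg : g * g = 1) (v : V) : mu f g (mu f g v) = mu f g v :=
  min'_congr (Uinv hf hg (mu_mem v)) _ _

lemma pos_total (v : V) :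
    (zp f g).SameCycle (mu f g v) v ∨ (zp f g).SameCycle (mu f g v) (f v) := by
  rcases mem_Ucyc_iff.mp (mu_mem (f := f) (g := g) v) with h | h
  · exact Or.inl h.symm
  · exact Or.inr h.symm

lemma pos_excl (hf : f * f = 1) (hg : g * g = 1) (hf' : ∀ v, f v ≠ v) (hg' : ∀ v, g v ≠ v)
    (v : V) : ¬ ((zp f g).SameCycle (mu f g v) v ∧ (zp f g).SameCycle (mu f g v) (f v)) := by
  rintro ⟨h1, h2⟩
  exact not_sc_fv hf hg hf' hg' v (h1.symm.trans h2)

lemma Pos_f (hf : f * f = 1) (hg : g * g = 1) (hf' : ∀ v, f v ≠ v) (hg' : ∀ v, g v ≠ v)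
    (v : V) : Pos f g (f v) ↔ ¬ Pos f g v := by
  unfold Pos
  rw [mu_f hf]
  constructor
  · intro h h2
    exact pos_excl hf hg hf' hg' v ⟨h2, h⟩
  · intro h
    rcases pos_total (f := f) (g := g) v with h1 | h1
    · exact absurd h1 h
    · exact h1

lemma Pos_g (hf : f * f = 1) (hg : g * g = 1) (hf' : ∀ v, f v ≠ v) (hg' : ∀ v, g v ≠ v)
    (v : V) : Pos f g (g v) ↔ ¬ Pos f g v := by
  unfold Pos
  rw [mu_g hf hg]
  have : (zp f g).SameCycle (mu f g v) (g v) ↔ (zp f g).SameCycle (mu f g v) (f v) := by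
    constructor
    · intro h; exact h.trans (sc_fv_gv hf v).symm
    · intro h; exact h.trans (sc_fv_gv hf v)
  rw [this]
  constructor
  · intro h h2
    exact pos_excl hf hg hf' hg' v ⟨h2, h⟩
  · intro h
    rcases pos_total (f := f) (g := g) v with h1 | h1
    · exact absurd h1 h
    · exact h1

lemma Pos_mu (hf : f * f = 1) (hg : g * g = 1) (v : V) : Pos f g (mu f g v) := by
  unfold Pos
  rw [mu_mu hf hg]

variable (f g) in
def phiFun (v : V) : V := if Pos f g v then f v else g v

lemma phiFun_injective (hf : f * f = 1) (hg : g * g = 1) (hf' : ∀ v, f v ≠ v)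
    (hg' : ∀ v, g v ≠ v) : Function.Injective (phiFun f g) := by
  intro a b hab
  unfold phiFun at hab
  by_cases ha : Pos f g a <;> by_cases hb : Pos f g b <;>
    simp only [ha, hb, if_pos, if_neg, if_true, if_false] at hab
  · exact f.injective hab
  · exfalso
    have h1 : ¬ Pos f g (f a) := by rw [Pos_f hf hg hf' hg']; simpa using ha
    have h2 : Pos f g (g b) := by rw [Pos_g hf hg hf' hg']; exact hb
    rw [hab] at h1
    exact h1 h2
  · exfalso
    have h1 : ¬ Pos f g (f b) := by rw [Pos_f hf hg hf' hg']; simpa using hb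
    have h2 : Pos f g (g a) := by rw [Pos_g hf hg hf' hg']; exact ha
    rw [← hab] at h1
    exact h1 h2
  · exact g.injective hab

noncomputable def Phi (f g : Equiv.Perm V) (hf : f * f = 1) (hg : g * g = 1)
    (hf' : ∀ v, f v ≠ v) (hg' : ∀ v, g v ≠ v) : Equiv.Perm V :=
  Equiv.ofBijective (phiFun f g)
    ((Finite.injective_iff_bijective).mp (phiFun_injective hf hg hf' hg'))

section PhiProps

variable (hf : f * f = 1) (hg : g * g = 1) (hf' : ∀ v, f v ≠ v) (hg' : ∀ v, g v ≠ v)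

lemma Phi_pos {v : V} (h : Pos f g v) : Phi f g hf hg hf' hg' v = f v := by
  show phiFun f g v = f v
  rw [phiFun, if_pos h]

lemma Phi_neg {v : V} (h : ¬ Pos f g v) : Phi f g hf hg hf' hg' v = g v := by
  show phiFun f g v = g v
  rw [phiFun, if_neg h]

lemma Phi_f_of_neg {v : V} (h : ¬ Pos f g v) : Phi f g hf hg hf' hg' (f v) = v := by
  rw [Phi_pos hf hg hf' hg' (by rw [Pos_f hf hg hf' hg']; exact h), ffv hf]

lemma Phi_g_of_pos {v : V} (h : Pos f g v) : Phi f g hf hg hf' hg' (g v) = v := by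
  rw [Phi_neg hf hg hf' hg' (by rw [Pos_g hf hg hf' hg']; simpa using h), ffv hg]

lemma Phi_inv_pos {v : V} (h : Pos f g v) : (Phi f g hf hg hf' hg')⁻¹ v = g v := by
  rw [Equiv.Perm.inv_eq_iff_eq]
  exact (Phi_g_of_pos hf hg hf' hg' h).symm

lemma Phi_inv_neg {v : V} (h : ¬ Pos f g v) : (Phi f g hf hg hf' hg')⁻¹ v = f v := by
  rw [Equiv.Perm.inv_eq_iff_eq]
  exact (Phi_f_of_neg hf hg hf' hg' h).symm

lemma sc_phi_f (v : V) : (Phi f g hf hg hf' hg').SameCycle v (f v) := by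
  by_cases h : Pos f g v
  · exact ⟨1, by rw [zpow_one, Phi_pos hf hg hf' hg' h]⟩
  · exact ⟨-1, by rw [zpow_neg_one, Phi_inv_neg hf hg hf' hg' h]⟩

lemma sc_phi_g (v : V) : (Phi f g hf hg hf' hg').SameCycle v (g v) := by
  by_cases h : Pos f g v
  · exact ⟨-1, by rw [zpow_neg_one, Phi_inv_pos hf hg hf' hg' h]⟩
  · exact ⟨1, by rw [zpow_one, Phi_neg hf hg hf' hg' h]⟩

lemma sc_phi_z (v : V) : (Phi f g hf hg hf' hg').SameCycle v (zp f g v) :=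
  (sc_phi_f hf hg hf' hg' v).trans (sc_phi_g hf hg hf' hg' (f v))

lemma sc_phi_zinv (v : V) : (Phi f g hf hg hf' hg').SameCycle v ((zp f g)⁻¹ v) := by
  rw [zinv_v hf hg]
  exact (sc_phi_g hf hg hf' hg' v).trans (sc_phi_f hf hg hf' hg' (g v))

lemma sc_phi_zpow (k : ℤ) (v : V) :
    (Phi f g hf hg hf' hg').SameCycle v (((zp f g)^k) v) := by
  induction k using Int.induction_on with
  | zero => simpa using Equiv.Perm.SameCycle.refl _ v
  | succ i ih =>
    have hstep : ((zp f g)^((i:ℤ)+1)) v = zp f g (((zp f g)^(i:ℤ)) v) := by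
      rw [add_comm, zpow_add, zpow_one, Equiv.Perm.mul_apply]
    rw [hstep]
    exact ih.trans (sc_phi_z hf hg hf' hg' _)
  | pred i ih =>
    have hstep : ((zp f g)^(-(i:ℤ)-1)) v = (zp f g)⁻¹ (((zp f g)^(-(i:ℤ))) v) := by
      rw [sub_eq_add_neg, add_comm, zpow_add, zpow_neg_one, Equiv.Perm.mul_apply]
    rw [hstep]
    exact ih.trans (sc_phi_zinv hf hg hf' hg' _)

lemma sc_phi_iff (v w : V) :
    (Phi f g hf hg hf' hg').SameCycle v w ↔ w ∈ Ucyc f g v := by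
  constructor
  · rintro ⟨k, rfl⟩
    have main : ∀ k : ℤ, ((Phi f g hf hg hf' hg')^k) v ∈ Ucyc f g v := by
      intro k
      induction k using Int.induction_on with
      | zero => simpa using mem_Ucyc_self f g v
      | succ i ih =>
        set u := ((Phi f g hf hg hf' hg')^(i:ℤ)) v with hu
        have hstep : ((Phi f g hf hg hf' hg')^((i:ℤ)+1)) v = Phi f g hf hg hf' hg' u := by
          rw [add_comm, zpow_add, zpow_one, Equiv.Perm.mul_apply]
        rw [hstep, ← Uinv hf hg ih]
        by_cases h : Pos f g u
        · rw [Phi_pos hf hg hf' hg' h]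
          exact mem_Ucyc_iff.mpr (Or.inr (Equiv.Perm.SameCycle.refl _ _))
        · rw [Phi_neg hf hg hf' hg' h]
          exact mem_Ucyc_iff.mpr (Or.inr (sc_fv_gv hf u))
      | pred i ih =>
        set u := ((Phi f g hf hg hf' hg')^(-(i:ℤ))) v with hu
        have hstep : ((Phi f g hf hg hf' hg')^(-(i:ℤ)-1)) v
            = (Phi f g hf hg hf' hg')⁻¹ u := by
          rw [sub_eq_add_neg, add_comm, zpow_add, zpow_neg_one, Equiv.Perm.mul_apply]
        rw [hstep, ← Uinv hf hg ih]
        by_cases h : Pos f g u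
        · rw [Phi_inv_pos hf hg hf' hg' h]
          exact mem_Ucyc_iff.mpr (Or.inr (sc_fv_gv hf u))
        · rw [Phi_inv_neg hf hg hf' hg' h]
          exact mem_Ucyc_iff.mpr (Or.inr (Equiv.Perm.SameCycle.refl _ _))
    exact main k
  · intro hw
    rcases mem_Ucyc_iff.mp hw with ⟨k, rfl⟩ | ⟨k, rfl⟩
    · exact sc_phi_zpow hf hg hf' hg' k v
    · exact (sc_phi_f hf hg hf' hg' v).trans (sc_phi_zpow hf hg hf' hg' k (f v))

end PhiProps

def posS (sg : Equiv.Perm V) (v : V) : Prop :=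
  (sg * sg).SameCycle ((Finset.univ.filter (fun w => sg.SameCycle v w)).min'
    ⟨v, Finset.mem_filter.mpr ⟨Finset.mem_univ v, Equiv.Perm.SameCycle.refl sg v⟩⟩) v

section PhiProps2

variable (hf : f * f = 1) (hg : g * g = 1) (hf' : ∀ v, f v ≠ v) (hg' : ∀ v, g v ≠ v)

lemma up_lemma {u : V} (h : Pos f g u) :
    (Phi f g hf hg hf' hg' * Phi f g hf hg hf' hg') u = zp f g u ∧ Pos f g (zp f g u) := by
  have h1 : Phi f g hf hg hf' hg' u = f u := Phi_pos hf hg hf' hg' h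
  have h2 : ¬ Pos f g (f u) := by rw [Pos_f hf hg hf' hg']; simpa using h
  have h3 : Phi f g hf hg hf' hg' (f u) = g (f u) := Phi_neg hf hg hf' hg' h2
  have hz : zp f g u = g (f u) := rfl
  constructor
  · rw [Equiv.Perm.mul_apply, h1, h3, hz]
  · rw [hz, Pos_g hf hg hf' hg']
    exact h2
  
lemma down_lemma {u : V} (h : Pos f g u) :
    (Phi f g hf hg hf' hg' * Phi f g hf hg hf' hg')⁻¹ u = (zp f g)⁻¹ u
      ∧ Pos f g ((zp f g)⁻¹ u) := by
  have h1 : (Phi f g hf hg hf' hg')⁻¹ u = g u := Phi_inv_pos hf hg hf' hg' h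
  have h2 : ¬ Pos f g (g u) := by rw [Pos_g hf hg hf' hg']; simpa using h
  have h3 : (Phi f g hf hg hf' hg')⁻¹ (g u) = f (g u) := Phi_inv_neg hf hg hf' hg' h2
  have hz : (zp f g)⁻¹ u = f (g u) := zinv_v hf hg u
  constructor
  · rw [mul_inv_rev, Equiv.Perm.mul_apply, h1, h3, hz]
  · rw [hz, Pos_f hf hg hf' hg']
    exact h2

lemma main_ind (v : V) (k : ℤ) :
    Pos f g (((zp f g)^k) (mu f g v)) ∧
      ((Phi f g hf hg hf' hg' * Phi f g hf hg hf' hg')^k) (mu f g v)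
        = ((zp f g)^k) (mu f g v) := by
  induction k using Int.induction_on with
  | zero => simpa using Pos_mu hf hg v
  | succ i ih =>
    obtain ⟨hP, heq⟩ := ih
    have hs1 : ∀ (p : Equiv.Perm V) (x : V), (p^((i:ℤ)+1)) x = p ((p^(i:ℤ)) x) := by
      intro p x
      rw [add_comm, zpow_add, zpow_one, Equiv.Perm.mul_apply]
    obtain ⟨he, hp2⟩ := up_lemma hf hg hf' hg' hP
    refine ⟨by rw [hs1]; exact hp2, ?_⟩
    rw [hs1, hs1, heq, he]
  | pred i ih =>
    obtain ⟨hP, heq⟩ := ih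
    have hs1 : ∀ (p : Equiv.Perm V) (x : V), (p^(-(i:ℤ)-1)) x = p⁻¹ ((p^(-(i:ℤ))) x) := by
      intro p x
      rw [sub_eq_add_neg, add_comm, zpow_add, zpow_neg_one, Equiv.Perm.mul_apply]
    obtain ⟨he, hp2⟩ := down_lemma hf hg hf' hg' hP
    refine ⟨by rw [hs1]; exact hp2, ?_⟩
    rw [hs1, hs1, heq, he]

lemma pos_iff_posS (v : V) : Pos f g v ↔ posS (Phi f g hf hg hf' hg') v := by
  have hfilt : Finset.univ.filter (fun w => (Phi f g hf hg hf' hg').SameCycle v w)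
      = Ucyc f g v := by
    ext w
    rw [Finset.mem_filter]
    constructor
    · intro hw
      exact (sc_phi_iff hf hg hf' hg' v w).mp hw.2
    · intro hw
      exact ⟨Finset.mem_univ _, (sc_phi_iff hf hg hf' hg' v w).mpr hw⟩
  have hmin : (Finset.univ.filter (fun w => (Phi f g hf hg hf' hg').SameCycle v w)).min'
      ⟨v, Finset.mem_filter.mpr ⟨Finset.mem_univ v, Equiv.Perm.SameCycle.refl _ v⟩⟩
      = mu f g v := min'_congr hfilt _ _
  unfold posS
  rw [hmin]
  constructor
  · rintro ⟨k, hk⟩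
    exact ⟨k, by rw [(main_ind hf hg hf' hg' v k).2, hk]⟩
  · rintro ⟨k, hk⟩
    obtain ⟨hP, heq⟩ := main_ind hf hg hf' hg' v k
    rw [heq] at hk
    rw [← hk]
    exact hP

end PhiProps2

theorem Phi_inj_pair {f' g' : Equiv.Perm V}
    (hf : f * f = 1) (hg : g * g = 1) (hf' : ∀ v, f v ≠ v) (hg' : ∀ v, g v ≠ v)
    (hf2 : f' * f' = 1) (hg2 : g' * g' = 1) (hf2' : ∀ v, f' v ≠ v) (hg2' : ∀ v, g' v ≠ v)
    (h : Phi f g hf hg hf' hg' = Phi f' g' hf2 hg2 hf2' hg2') : f = f' ∧ g = g' := by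
  have hpos : ∀ v, Pos f g v ↔ Pos f' g' v := by
    intro v
    rw [pos_iff_posS hf hg hf' hg', pos_iff_posS hf2 hg2 hf2' hg2', h]
  constructor
  · ext v
    by_cases hv : Pos f g v
    · rw [← Phi_pos hf hg hf' hg' hv, ← Phi_pos hf2 hg2 hf2' hg2' ((hpos v).mp hv), h]
    · rw [← Phi_inv_neg hf hg hf' hg' hv,
        ← Phi_inv_neg hf2 hg2 hf2' hg2' (fun hh => hv ((hpos v).mpr hh)), h]
  · ext v
    by_cases hv : Pos f g v
    · rw [← Phi_inv_pos hf hg hf' hg' hv, ← Phi_inv_pos hf2 hg2 hf2' hg2' ((hpos v).mp hv), h]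
    · rw [← Phi_neg hf hg hf' hg' hv,
        ← Phi_neg hf2 hg2 hf2' hg2' (fun hh => hv ((hpos v).mpr hh)), h]

end InvolPair


/-- A set `s` of edges is a `k`-matching of `G`: `k` pairwise vertex-disjoint edges. -/
def IsNMatching {V : Type*} (G : SimpleGraph V) (k : ℕ) (s : Set (Sym2 V)) : Prop :=
  s ⊆ G.edgeSet ∧ s.ncard = k ∧ s.Pairwise fun e f => ∀ v, ¬(v ∈ e ∧ v ∈ f)

/-- The number of `k`-matchings of `G`. -/
noncomputable def matchingCount {V : Type*} (G : SimpleGraph V) (k : ℕ) : ℕ :=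
  Set.ncard {s : Set (Sym2 V) | IsNMatching G k s}

section GraphGlue

open Equiv Finset

variable {V : Type} [Fintype V] [DecidableEq V] [LinearOrder V]

def adjMat (G : SimpleGraph V) [DecidableRel G.Adj] : V → V → ℕ :=
  fun v w => if G.Adj v w then 1 else 0

lemma pm_sq_le (G : SimpleGraph V) [DecidableRel G.Adj] :
    Nat.card {f : Equiv.Perm V // (∀ v, G.Adj v (f v)) ∧ f * f = 1} *
      Nat.card {f : Equiv.Perm V // (∀ v, G.Adj v (f v)) ∧ f * f = 1}
      ≤ bijCount (adjMat G) := by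
  classical
  set PM := {f : Equiv.Perm V // (∀ v, G.Adj v (f v)) ∧ f * f = 1} with hPM
  have key : Nat.card (PM × PM) ≤ Nat.card {e : V ≃ V // ∀ c, adjMat G (e c) c = 1} := by
    apply Nat.card_le_card_of_injective
      (f := fun p : PM × PM => (⟨Phi p.1.1 p.2.1 p.1.2.2 p.2.2.2
        (fun v => (p.1.2.1 v).ne') (fun v => (p.2.2.1 v).ne'), by
          intro c
          have hPhi : Phi p.1.1 p.2.1 p.1.2.2 p.2.2.2
              (fun v => (p.1.2.1 v).ne') (fun v => (p.2.2.1 v).ne') c = p.1.1 c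
              ∨ Phi p.1.1 p.2.1 p.1.2.2 p.2.2.2
              (fun v => (p.1.2.1 v).ne') (fun v => (p.2.2.1 v).ne') c = p.2.1 c := by
            by_cases h : Pos p.1.1 p.2.1 c
            · exact Or.inl (Phi_pos _ _ _ _ h)
            · exact Or.inr (Phi_neg _ _ _ _ h)
          rcases hPhi with h | h <;> rw [h] <;> unfold adjMat <;> rw [if_pos]
          · exact (p.1.2.1 c).symm
          · exact (p.2.2.1 c).symm⟩ :
        {e : V ≃ V // ∀ c, adjMat G (e c) c = 1}))
    intro p q hpq
    simp only [Subtype.mk.injEq] at hpq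
    obtain ⟨h1, h2⟩ := Phi_inj_pair _ _ _ _ _ _ _ _ hpq
    have hp1 : p.1 = q.1 := Subtype.ext h1
    have hp2 : p.2 = q.2 := Subtype.ext h2
    exact Prod.ext hp1 hp2
  rw [Nat.card_prod] at key
  calc Nat.card PM * Nat.card PM ≤ Nat.card {e : V ≃ V // ∀ c, adjMat G (e c) c = 1} := key
    _ = bijCount (adjMat G) := by rw [Nat.card_eq_fintype_card]; rfl

lemma colSum_adjMat (G : SimpleGraph V) [DecidableRel G.Adj] (c : V) :
    colSum (adjMat G) c = G.degree c := by
  rw [colSum, SimpleGraph.degree, SimpleGraph.neighborFinset_eq_filter]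
  rw [Finset.card_filter]
  refine Finset.sum_congr rfl (fun v _ => ?_)
  unfold adjMat
  by_cases h : G.Adj v c
  · rw [if_pos h, if_pos (h.symm)]
  · rw [if_neg h, if_neg (fun hh => h hh.symm)]

end GraphGlue

section MatchGlue

open Finset

variable {n : ℕ} (G : SimpleGraph (Fin (2*n))) [DecidableRel G.Adj]

lemma matching_cover {s : Set (Sym2 (Fin (2*n)))} (hs : IsNMatching G n s) :
    ∀ v : Fin (2*n), ∃ e ∈ s, v ∈ e := by
  classical
  have hfin : s.Finite := Set.toFinite s
  set F : Finset (Sym2 (Fin (2*n))) := hfin.toFinset with hF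
  have hFcard : F.card = n := by
    rw [hF, ← Set.ncard_eq_toFinset_card _ hfin]
    exact hs.2.1
  set vset : Sym2 (Fin (2*n)) → Finset (Fin (2*n)) :=
    fun e => Finset.univ.filter (fun v => v ∈ e) with hvset
  have hvcard : ∀ e ∈ F, (vset e).card = 2 := by
    intro e heF
    have hes : e ∈ s := by rwa [hF, Set.Finite.mem_toFinset] at heF
    have hedge := hs.1 hes
    induction e using Sym2.ind with
    | _ x y =>
      have hxy : x ≠ y := (G.mem_edgeSet.mp hedge).ne
      have : vset s(x, y) = {x, y} := by
        ext w
        simp [hvset, Sym2.mem_iff]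
      rw [this, Finset.card_insert_of_notMem (by simp [hxy]), Finset.card_singleton]
  have hdisj : ∀ e₁ ∈ F, ∀ e₂ ∈ F, e₁ ≠ e₂ → Disjoint (vset e₁) (vset e₂) := by
    intro e₁ h₁ e₂ h₂ hne
    rw [hF, Set.Finite.mem_toFinset] at h₁ h₂
    rw [Finset.disjoint_left]
    intro v hv1 hv2
    simp only [hvset, Finset.mem_filter] at hv1 hv2
    exact hs.2.2 h₁ h₂ hne v ⟨hv1.2, hv2.2⟩
  have hT : (F.biUnion vset).card = 2 * n := by
    rw [Finset.card_biUnion hdisj]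
    rw [Finset.sum_congr rfl hvcard, Finset.sum_const, hFcard, smul_eq_mul, mul_comm]
  have hTuniv : F.biUnion vset = Finset.univ := by
    apply Finset.eq_univ_of_card
    rw [hT, Fintype.card_fin]
  intro v
  have : v ∈ F.biUnion vset := by rw [hTuniv]; exact Finset.mem_univ v
  obtain ⟨e, heF, hv⟩ := Finset.mem_biUnion.mp this
  rw [hF, Set.Finite.mem_toFinset] at heF
  simp only [hvset, Finset.mem_filter] at hv
  exact ⟨e, heF, hv.2⟩

lemma matching_uniq {s : Set (Sym2 (Fin (2*n)))} (hs : IsNMatching G n s) :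
    ∀ e₁ ∈ s, ∀ e₂ ∈ s, ∀ v : Fin (2*n), v ∈ e₁ → v ∈ e₂ → e₁ = e₂ := by
  intro e₁ h₁ e₂ h₂ v hv₁ hv₂
  by_contra hne
  exact hs.2.2 h₁ h₂ hne v ⟨hv₁, hv₂⟩

lemma exists_invol {s : Set (Sym2 (Fin (2*n)))} (hs : IsNMatching G n s) :
    ∃ f : Equiv.Perm (Fin (2*n)),
      ((∀ v, G.Adj v (f v)) ∧ f * f = 1) ∧ ∀ v, s(v, f v) ∈ s := by
  classical
  have hex : ∀ v : Fin (2*n), ∃ w, s(v, w) ∈ s := by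
    intro v
    obtain ⟨e, he, hv⟩ := matching_cover G hs v
    exact ⟨Sym2.Mem.other' hv, by rwa [Sym2.other_spec' hv]⟩
  set fth : Fin (2*n) → Fin (2*n) := fun v => (hex v).choose with hfthdef
  have hfth : ∀ v, s(v, fth v) ∈ s := fun v => (hex v).choose_spec
  have hadj : ∀ v, G.Adj v (fth v) := fun v => G.mem_edgeSet.mp (hs.1 (hfth v))
  have hinvol : ∀ v, fth (fth v) = v := by
    intro v
    have h1 := hfth v
    have h2 := hfth (fth v)
    have heq : s(fth v, fth (fth v)) = s(v, fth v) :=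
      matching_uniq G hs _ h2 _ h1 (fth v) (Sym2.mem_mk_left _ _) (Sym2.mem_mk_right _ _)
    rcases Sym2.eq_iff.mp heq with ⟨h3, h4⟩ | ⟨_, h4⟩
    · rw [h4, h3]
    · exact h4
  refine ⟨Function.Involutive.toPerm fth hinvol, ⟨fun v => hadj v, ?_⟩, fun v => hfth v⟩
  apply Equiv.ext
  intro v
  simp only [Equiv.Perm.mul_apply, Equiv.Perm.one_apply, Function.Involutive.coe_toPerm]
  exact hinvol v

lemma matchingCount_le_pm :
    matchingCount G n
      ≤ Nat.card {f : Equiv.Perm (Fin (2*n)) // (∀ v, G.Adj v (f v)) ∧ f * f = 1} := by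
  classical
  rw [matchingCount, ← Nat.card_coe_set_eq]
  apply Nat.card_le_card_of_injective
    (f := fun x : {s : Set (Sym2 (Fin (2*n))) | IsNMatching G n s} =>
      (⟨(exists_invol G x.2).choose, (exists_invol G x.2).choose_spec.1⟩ :
        {f : Equiv.Perm (Fin (2*n)) // (∀ v, G.Adj v (f v)) ∧ f * f = 1}))
  intro x y hxy
  simp only [Subtype.mk.injEq] at hxy
  have hx := (exists_invol G x.2).choose_spec.2
  have hy := (exists_invol G y.2).choose_spec.2
  rw [hxy] at hx
  -- now both x.1 and y.1 have all edges s(v, f v) for the same f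
  apply Subtype.ext
  have hmem : ∀ (s : Set (Sym2 (Fin (2*n)))) (hs : IsNMatching G n s)
      (φ : Fin (2*n) → Fin (2*n)), (∀ v, s(v, φ v) ∈ s) →
      ∀ e ∈ s, ∃ a, e = s(a, φ a) := by
    intro s hs φ hφ e he
    induction e using Sym2.ind with
    | _ a b =>
      exact ⟨a, (matching_uniq G hs _ he _ (hφ a) a (Sym2.mem_mk_left _ _)
        (Sym2.mem_mk_left _ _))⟩
  ext e
  constructor
  · intro he
    obtain ⟨a, rfl⟩ := hmem x.1 x.2 _ hx e he
    exact hy a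
  · intro he
    obtain ⟨a, rfl⟩ := hmem y.1 y.2 _ hy e he
    exact hx a

end MatchGlue
set_option maxHeartbeats 1000000 in
/-- For every `r`-regular simple graph `G` on `2n` vertices, the number of perfect
matchings of `G` is at most `(r!)^(n/r)`. -/
theorem card_perfectMatchings_le_rpow (n r : ℕ) (hr : 1 ≤ r)
    (G : SimpleGraph (Fin (2 * n))) [DecidableRel G.Adj] (hreg : G.IsRegularOfDegree r) :
    (matchingCount G n : ℝ) ≤ ((Nat.factorial r : ℝ)) ^ ((n : ℝ) / (r : ℝ)) := by
  classical
  have h01 : ∀ v w, adjMat G v w ≤ 1 := by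
    intro v w
    unfold adjMat
    split <;> simp
  have hbreg : (bijCount (adjMat G) : ℝ) ≤ ∏ c : Fin (2*n), fb (colSum (adjMat G) c) :=
    bregman_aux (2*n) (Fin (2*n)) (Fin (2*n)) (adjMat G) h01 (Fintype.card_fin _)
  have hcol : ∀ c, colSum (adjMat G) c = r := by
    intro c
    rw [colSum_adjMat]
    exact hreg c
  have hprod : ∏ c : Fin (2*n), fb (colSum (adjMat G) c) = fb r ^ (2*n) := by
    rw [Finset.prod_congr rfl (fun c _ => by rw [hcol c]), Finset.prod_const,
      Finset.card_univ, Fintype.card_fin]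
  have h1 := matchingCount_le_pm G
  have h2 := pm_sq_le G
  obtain ⟨m, hm⟩ : ∃ m, Nat.card {f : Equiv.Perm (Fin (2*n)) // (∀ v, G.Adj v (f v)) ∧ f * f = 1} = m :=
    ⟨_, rfl⟩
  rw [hm] at h1 h2
  have h3 : (bijCount (adjMat G) : ℝ) ≤ fb r ^ (2*n) := hbreg.trans_eq hprod
  have hfactpos : (0:ℝ) < (Nat.factorial r : ℝ) := by exact_mod_cast Nat.factorial_pos r
  have hR : fb r ^ (2*n) = (((Nat.factorial r : ℝ)) ^ ((n:ℝ)/(r:ℝ)))^2 := by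
    rw [fb, ← Real.rpow_natCast ((Nat.factorial r : ℝ) ^ ((1:ℝ)/(r:ℝ))) (2*n),
      ← Real.rpow_natCast ((Nat.factorial r : ℝ) ^ ((n:ℝ)/(r:ℝ))) 2,
      ← Real.rpow_mul hfactpos.le, ← Real.rpow_mul hfactpos.le]
    congr 1
    push_cast
    field_simp
  have hmle : (m:ℝ) ≤ (Nat.factorial r : ℝ) ^ ((n:ℝ)/(r:ℝ)) := by
    have hmm : ((m:ℝ))^2 ≤ (((Nat.factorial r : ℝ)) ^ ((n:ℝ)/(r:ℝ)))^2 := by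
      rw [← hR]
      calc ((m:ℝ))^2 = ((m*m : ℕ) : ℝ) := by push_cast; ring
        _ ≤ (bijCount (adjMat G) : ℝ) := by exact_mod_cast h2
        _ ≤ _ := h3
    exact le_of_pow_le_pow_left₀ two_ne_zero (Real.rpow_nonneg hfactpos.le _) hmm
  calc (matchingCount G n : ℝ) ≤ (m : ℝ) := by exact_mod_cast h1
    _ ≤ _ := hmle
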